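/- Neither of the polynomials f₁ = X³ + Y³ + 3X²Z + 3Y²Z + 3XZ² + 3YZ² + 2Z³ nor f₂ = X³ + XY² + X²Z + 2XYZ + 3Y²Z + 4XZ² + 2YZ² + 2Z³ in ℝ[X,Y,Z] can be written as a product g·h of two nonconstant polynomials g, h ∈ ℝ[X,Y,Z] each of which has all coefficients nonnegative. -/

import Mathlib

noncomputable section

open MvPolynomial in
/-- `f₁ = X³ + Y³ + 3X²Z + 3Y²Z + 3XZ² + 3YZ² + 2Z³` over `ℝ`. -/
def f1 : MvPolynomial (Fin 3) ℝ :=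
  X 0 ^ 3 + X 1 ^ 3 + 3 * X 0 ^ 2 * X 2 + 3 * X 1 ^ 2 * X 2 +
    3 * X 0 * X 2 ^ 2 + 3 * X 1 * X 2 ^ 2 + 2 * X 2 ^ 3

open MvPolynomial in
/-- `f₂ = X³ + XY² + X²Z + 2XYZ + 3Y²Z + 4XZ² + 2YZ² + 2Z³` over `ℝ`. -/
def f2 : MvPolynomial (Fin 3) ℝ :=
  X 0 ^ 3 + X 0 * X 1 ^ 2 + X 0 ^ 2 * X 2 + 2 * X 0 * X 1 * X 2 +
    3 * X 1 ^ 2 * X 2 + 4 * X 0 * X 2 ^ 2 + 2 * X 1 * X 2 ^ 2 + 2 * X 2 ^ 3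

/-- `f` admits no factorization `f = g·h` into two nonconstant polynomials
each with all coefficients nonnegative. -/
def NoNonnegFactorization (f : MvPolynomial (Fin 3) ℝ) : Prop :=
  ¬ ∃ g h : MvPolynomial (Fin 3) ℝ,
      0 < g.totalDegree ∧ 0 < h.totalDegree ∧
      (∀ m, 0 ≤ MvPolynomial.coeff m g) ∧ (∀ m, 0 ≤ MvPolynomial.coeff m h) ∧
      f = g * h

namespace Aux

open MvPolynomial

/-- exponent vectors -/
def e (a b c : ℕ) : Fin 3 →₀ ℕ :=
  Finsupp.single 0 a + Finsupp.single 1 b + Finsupp.single 2 c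

@[simp] lemma e_apply0 (a b c : ℕ) : e a b c 0 = a := by
  simp [e, Finsupp.single_apply]
@[simp] lemma e_apply1 (a b c : ℕ) : e a b c 1 = b := by
  simp [e, Finsupp.single_apply]
@[simp] lemma e_apply2 (a b c : ℕ) : e a b c 2 = c := by
  simp [e, Finsupp.single_apply]

lemma fs_eq_iff (u v : Fin 3 →₀ ℕ) : u = v ↔ u 0 = v 0 ∧ u 1 = v 1 ∧ u 2 = v 2 := by
  constructor
  · rintro rfl; exact ⟨rfl, rfl, rfl⟩
  · rintro ⟨h0, h1, h2⟩; ext i; fin_cases i <;> assumption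

lemma e_eta (m : Fin 3 →₀ ℕ) : m = e (m 0) (m 1) (m 2) := by
  rw [fs_eq_iff]; simp

lemma comps {a b : Fin 3 →₀ ℕ} {x y z : ℕ} (h : a + b = e x y z) :
    a 0 + b 0 = x ∧ a 1 + b 1 = y ∧ a 2 + b 2 = z := by
  rw [fs_eq_iff] at h
  simpa using h

@[simp] lemma e_add (a b c a' b' c' : ℕ) : e a b c + e a' b' c' = e (a+a') (b+b') (c+c') := by
  rw [fs_eq_iff]; simp

/-- degree of a monomial -/
def dg (m : Fin 3 →₀ ℕ) : ℕ := m 0 + m 1 + m 2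

@[simp] lemma dg_e (a b c : ℕ) : dg (e a b c) = a + b + c := by simp [dg]

lemma sum_eq_dg (m : Fin 3 →₀ ℕ) : (m.sum fun _ k => k) = dg m := by
  rw [Finsupp.sum_fintype]
  · rw [Fin.sum_univ_three]; rfl
  · intro i; rfl

lemma sum_id_eq_dg (m : Fin 3 →₀ ℕ) : (m.sum fun _ => (id : ℕ → ℕ)) = dg m :=
  sum_eq_dg m

lemma sum_support_eq_dg (m : Fin 3 →₀ ℕ) : ∑ i ∈ m.support, m i = dg m :=
  sum_eq_dg m

/-- monomial form of f1 -/
lemma f1_eq : f1 = monomial (e 3 0 0) 1 + monomial (e 0 3 0) 1 + monomial (e 2 0 1) 3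
    + monomial (e 0 2 1) 3 + monomial (e 1 0 2) 3 + monomial (e 0 1 2) 3
    + monomial (e 0 0 3) 2 := by
  rw [f1, show (3 : MvPolynomial (Fin 3) ℝ) = C 3 from rfl,
    show (2 : MvPolynomial (Fin 3) ℝ) = C 2 from rfl]
  ext i
  simp only [X, monomial_pow, monomial_mul, C_apply, coeff_add, coeff_monomial, fs_eq_iff,
    Finsupp.add_apply, Finsupp.single_apply, e, Finsupp.coe_add, Pi.add_apply]
  norm_num [Finsupp.single_apply, Fin.ext_iff]

/-- monomial form of f2 -/
lemma f2_eq : f2 = monomial (e 3 0 0) 1 + monomial (e 1 2 0) 1 + monomial (e 2 0 1) 1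
    + monomial (e 1 1 1) 2 + monomial (e 0 2 1) 3 + monomial (e 1 0 2) 4
    + monomial (e 0 1 2) 2 + monomial (e 0 0 3) 2 := by
  rw [f2, show (2 : MvPolynomial (Fin 3) ℝ) = C 2 from rfl,
    show (3 : MvPolynomial (Fin 3) ℝ) = C 3 from rfl,
    show (4 : MvPolynomial (Fin 3) ℝ) = C 4 from rfl]
  ext i
  simp only [X, monomial_pow, monomial_mul, C_apply, coeff_add, coeff_monomial, fs_eq_iff,
    Finsupp.add_apply, Finsupp.single_apply, e, Finsupp.coe_add, Pi.add_apply]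
  norm_num [Finsupp.single_apply, Fin.ext_iff]

lemma coeff_f1 (a b c : ℕ) : coeff (e a b c) f1 =
    (if 3 = a ∧ 0 = b ∧ 0 = c then 1 else 0) + (if 0 = a ∧ 3 = b ∧ 0 = c then 1 else 0)
    + (if 2 = a ∧ 0 = b ∧ 1 = c then 3 else 0) + (if 0 = a ∧ 2 = b ∧ 1 = c then 3 else 0)
    + (if 1 = a ∧ 0 = b ∧ 2 = c then 3 else 0) + (if 0 = a ∧ 1 = b ∧ 2 = c then 3 else 0)
    + (if 0 = a ∧ 0 = b ∧ 3 = c then 2 else 0) := by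
  simp only [f1_eq, coeff_add, coeff_monomial, fs_eq_iff, e_apply0, e_apply1, e_apply2]

lemma coeff_f2 (a b c : ℕ) : coeff (e a b c) f2 =
    (if 3 = a ∧ 0 = b ∧ 0 = c then 1 else 0) + (if 1 = a ∧ 2 = b ∧ 0 = c then 1 else 0)
    + (if 2 = a ∧ 0 = b ∧ 1 = c then 1 else 0) + (if 1 = a ∧ 1 = b ∧ 1 = c then 2 else 0)
    + (if 0 = a ∧ 2 = b ∧ 1 = c then 3 else 0) + (if 1 = a ∧ 0 = b ∧ 2 = c then 4 else 0)
    + (if 0 = a ∧ 1 = b ∧ 2 = c then 2 else 0) + (if 0 = a ∧ 0 = b ∧ 3 = c then 2 else 0) := by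
  simp only [f2_eq, coeff_add, coeff_monomial, fs_eq_iff, e_apply0, e_apply1, e_apply2]

lemma f1_td : f1.totalDegree ≤ 3 := by
  rw [f1_eq]
  repeat
    refine le_trans (totalDegree_add _ _) (max_le ?_ ?_)
  all_goals
    refine le_trans (totalDegree_monomial_le _ _) ?_
  all_goals simp [sum_id_eq_dg]

lemma f2_td : f2.totalDegree ≤ 3 := by
  rw [f2_eq]
  repeat
    refine le_trans (totalDegree_add _ _) (max_le ?_ ?_)
  all_goals
    refine le_trans (totalDegree_monomial_le _ _) ?_
  all_goals simp [sum_id_eq_dg]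

lemma coeff_zero_high {f : MvPolynomial (Fin 3) ℝ} (htd : f.totalDegree ≤ 3)
    {m : Fin 3 →₀ ℕ} (hm : 4 ≤ dg m) : coeff m f = 0 := by
  refine coeff_eq_zero_of_totalDegree_lt ?_
  rw [sum_support_eq_dg]
  omega


lemma dg_add (a b : Fin 3 →₀ ℕ) : dg (a + b) = dg a + dg b := by
  simp [dg]; ring

variable {g h : MvPolynomial (Fin 3) ℝ}

/-- key lower bound: for nonneg polynomials, each antidiagonal term bounds the product coeff -/
lemma T1 (hg : ∀ m, 0 ≤ coeff m g) (hh : ∀ m, 0 ≤ coeff m h) (a b : Fin 3 →₀ ℕ) :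
    coeff a g * coeff b h ≤ coeff (a + b) (g * h) := by
  classical
  rw [coeff_mul]
  refine Finset.single_le_sum (f := fun p : (Fin 3 →₀ ℕ) × (Fin 3 →₀ ℕ) => coeff p.1 g * coeff p.2 h) (a := (a, b)) ?_ ?_
  · intro p _
    exact mul_nonneg (hg _) (hh _)
  · exact Finset.HasAntidiagonal.mem_antidiagonal.mpr rfl

/-- splitting lemma for positive coefficients of a product of nonneg polynomials -/
lemma T2 (hg : ∀ m, 0 ≤ coeff m g) (hh : ∀ m, 0 ≤ coeff m h) {m : Fin 3 →₀ ℕ}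
    (hpos : 0 < coeff m (g * h)) :
    ∃ a b, a + b = m ∧ 0 < coeff a g ∧ 0 < coeff b h := by
  classical
  rw [coeff_mul] at hpos
  obtain ⟨p, hp, hne⟩ := Finset.exists_ne_zero_of_sum_ne_zero hpos.ne'
  refine ⟨p.1, p.2, Finset.HasAntidiagonal.mem_antidiagonal.mp hp, ?_, ?_⟩
  · exact lt_of_le_of_ne (hg _) (fun hc => hne (by rw [← hc]; ring))
  · exact lt_of_le_of_ne (hh _) (fun hc => hne (by rw [← hc]; ring))

lemma zero_of {x y : ℝ} (hx : 0 < x) (hy : 0 ≤ y) (hle : x * y ≤ 0) : y = 0 := by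
  nlinarith

/-- degenerate case: one factor contains the full X³ monomial -/
lemma core0 {f : MvPolynomial (Fin 3) ℝ} (htd : f.totalDegree ≤ 3)
    (hg : ∀ m, 0 ≤ coeff m g) (hh : ∀ m, 0 ≤ coeff m h) (hgh : f = g * h)
    (hg3 : 0 < coeff (e 3 0 0) g) (hhd : 0 < h.totalDegree) : False := by
  have hne : h ≠ 0 := by
    intro h0
    rw [h0] at hhd
    simp at hhd
  obtain ⟨b, hb, hsup⟩ := Finset.exists_mem_eq_sup h.support
    (MvPolynomial.support_nonempty.mpr hne) (fun s => s.sum fun _ k => k)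
  have hbpos : 0 < coeff b h :=
    lt_of_le_of_ne (hh b) (Ne.symm (MvPolynomial.mem_support_iff.mp hb))
  have hdgb : 1 ≤ dg b := by
    have : h.totalDegree = dg b := by rw [MvPolynomial.totalDegree, hsup, sum_eq_dg]
    omega
  have hc0 : coeff (e 3 0 0 + b) f = 0 := by
    refine coeff_zero_high htd ?_
    rw [dg_add]
    simp
    omega
  have := T1 hg hh (e 3 0 0) b
  rw [← hgh, hc0] at this
  nlinarith

/-- main case for f1 : some factor has positive X² coefficient -/
lemma core1 (hg : ∀ m, 0 ≤ coeff m g) (hh : ∀ m, 0 ≤ coeff m h) (hgh : f1 = g * h)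
    (hβ : 0 < coeff (e 2 0 0) h) : False := by
  have hY : (0 : ℝ) < coeff (e 0 3 0) (g * h) := by
    rw [← hgh, coeff_f1]
    norm_num
  obtain ⟨a, b, hab, ha, hb⟩ := T2 hg hh hY
  obtain ⟨h0, h1, h2⟩ := comps hab
  have ha' : a = e 0 (a 1) 0 := by
    rw [e_eta a]
    simp only [e_apply0, e_apply1, e_apply2]
    rw [fs_eq_iff]
    simp
    omega
  have hkey := T1 hg hh a (e 2 0 0)
  rw [← hgh, ha', e_add] at hkey
  have hz : coeff (e (0+2) (a 1 + 0) (0+0)) f1 = 0 := by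
    rcases (by omega : a 1 ≤ 1 ∨ 2 ≤ a 1) with hj | hj
    · rw [coeff_f1]
      interval_cases j : a 1 <;> norm_num
    · refine coeff_zero_high f1_td ?_
      rw [dg_e]
      omega
  rw [hz] at hkey
  rw [ha'] at ha
  nlinarith


lemma zero_of' {x y : ℝ} (hx : 0 < x) (hy : 0 ≤ y) (hle : y * x ≤ 0) : y = 0 := by
  nlinarith

/-- main case for f2 -/
lemma core2 (hg : ∀ m, 0 ≤ coeff m g) (hh : ∀ m, 0 ≤ coeff m h) (hgh : f2 = g * h)
    (hα : 0 < coeff (e 1 0 0) g) (hβ : 0 < coeff (e 2 0 0) h) : False := by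
  classical
  -- zero extraction tools
  have zh : ∀ x y z : ℕ, coeff (e (1 + x) y z) f2 = 0 → coeff (e x y z) h = 0 := by
    intro x y z hz
    refine zero_of hα (hh _) ?_
    have h1 := T1 hg hh (e 1 0 0) (e x y z)
    rw [← hgh, e_add] at h1
    have h2 : coeff (e (1 + x) (0 + y) (0 + z)) f2 = 0 := by
      rw [show (0 + y) = y from by omega, show (0 + z) = z from by omega]
      exact hz
    rw [h2] at h1
    exact h1
  have zg : ∀ x y z : ℕ, coeff (e (x + 2) y z) f2 = 0 → coeff (e x y z) g = 0 := by
    intro x y z hz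
    refine zero_of' hβ (hg _) ?_
    have h1 := T1 hg hh (e x y z) (e 2 0 0)
    rw [← hgh, e_add] at h1
    have h2 : coeff (e (x + 2) (y + 0) (z + 0)) f2 = 0 := by
      rw [show (y + 0) = y from by omega, show (z + 0) = z from by omega]
      exact hz
    rw [h2] at h1
    exact h1
  have zg_deg : ∀ a : Fin 3 →₀ ℕ, 2 ≤ dg a → coeff a g = 0 := by
    intro a hda
    refine zero_of' hβ (hg _) ?_
    have h1 := T1 hg hh a (e 2 0 0)
    rw [← hgh] at h1
    have h2 : coeff (a + e 2 0 0) f2 = 0 := by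
      refine coeff_zero_high f2_td ?_
      rw [dg_add, dg_e]
      omega
    rw [h2] at h1
    exact h1
  -- specific zero coefficients
  have hg0 : coeff (e 0 0 0) g = 0 := zg 0 0 0 (by rw [coeff_f2]; norm_num)
  have hg010 : coeff (e 0 1 0) g = 0 := zg 0 1 0 (by rw [coeff_f2]; norm_num)
  have hh110 : coeff (e 1 1 0) h = 0 := zh 1 1 0 (by rw [coeff_f2]; norm_num)
  -- support of g
  have gsupp : ∀ a : Fin 3 →₀ ℕ, 0 < coeff a g → a = e 1 0 0 ∨ a = e 0 0 1 := by
    intro a ha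
    have hd : dg a ≤ 1 := by
      by_contra h'
      rw [zg_deg a (by omega)] at ha
      exact lt_irrefl _ ha
    have hd' : a 0 + a 1 + a 2 ≤ 1 := hd
    have hcases : (a 0 = 0 ∧ a 1 = 0 ∧ a 2 = 0) ∨ (a 0 = 1 ∧ a 1 = 0 ∧ a 2 = 0)
        ∨ (a 0 = 0 ∧ a 1 = 1 ∧ a 2 = 0) ∨ (a 0 = 0 ∧ a 1 = 0 ∧ a 2 = 1) := by omega
    rcases hcases with ⟨c0, c1, c2⟩ | ⟨c0, c1, c2⟩ | ⟨c0, c1, c2⟩ | ⟨c0, c1, c2⟩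
    · rw [e_eta a, c0, c1, c2, hg0] at ha
      exact absurd ha (lt_irrefl 0)
    · exact Or.inl (by rw [e_eta a, c0, c1, c2])
    · rw [e_eta a, c0, c1, c2, hg010] at ha
      exact absurd ha (lt_irrefl 0)
    · exact Or.inr (by rw [e_eta a, c0, c1, c2])
  -- positivity of the four key coefficients
  have ht : 0 < coeff (e 0 0 1) g ∧ 0 < coeff (e 0 2 0) h := by
    have hY : (0 : ℝ) < coeff (e 0 2 1) (g * h) := by
      rw [← hgh, coeff_f2]; norm_num
    obtain ⟨a, b, hab, ha, hb⟩ := T2 hg hh hY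
    obtain ⟨c0, c1, c2⟩ := comps hab
    rcases gsupp a ha with h1 | h1
    · rw [h1] at c0
      simp only [e_apply0] at c0
      omega
    · rw [h1] at c0 c1 c2
      simp only [e_apply0, e_apply1, e_apply2] at c0 c1 c2
      have hb' : b = e 0 2 0 := by
        rw [fs_eq_iff]
        simp only [e_apply0, e_apply1, e_apply2]
        omega
      rw [h1] at ha
      rw [hb'] at hb
      exact ⟨ha, hb⟩
  have hε : 0 < coeff (e 0 1 1) h := by
    have hY : (0 : ℝ) < coeff (e 1 1 1) (g * h) := by
      rw [← hgh, coeff_f2]; norm_num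
    obtain ⟨a, b, hab, ha, hb⟩ := T2 hg hh hY
    obtain ⟨c0, c1, c2⟩ := comps hab
    rcases gsupp a ha with h1 | h1
    · rw [h1] at c0 c1 c2
      simp only [e_apply0, e_apply1, e_apply2] at c0 c1 c2
      have hb' : b = e 0 1 1 := by
        rw [fs_eq_iff]
        simp only [e_apply0, e_apply1, e_apply2]
        omega
      rw [hb'] at hb
      exact hb
    · rw [h1] at c0 c1 c2
      simp only [e_apply0, e_apply1, e_apply2] at c0 c1 c2
      have hb' : b = e 1 1 0 := by
        rw [fs_eq_iff]
        simp only [e_apply0, e_apply1, e_apply2]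
        omega
      rw [hb', hh110] at hb
      exact absurd hb (lt_irrefl 0)
  -- the four exact equations
  have key : ∀ (m : Fin 3 →₀ ℕ) (a0 b0 : Fin 3 →₀ ℕ), a0 + b0 = m →
      (∀ p : (Fin 3 →₀ ℕ) × (Fin 3 →₀ ℕ), p ∈ Finset.HasAntidiagonal.antidiagonal m → p ≠ (a0, b0) →
        coeff p.1 g * coeff p.2 h = 0) →
      coeff m f2 = coeff a0 g * coeff b0 h := by
    intro m a0 b0 hab hside
    rw [hgh, coeff_mul]
    exact Finset.sum_eq_single_of_mem (a0, b0) (Finset.HasAntidiagonal.mem_antidiagonal.mpr hab) hside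
  have E1 : coeff (e 1 2 0) f2 = coeff (e 1 0 0) g * coeff (e 0 2 0) h := by
    refine key _ _ _ (by rw [e_add]) ?_
    intro p hp hne
    by_cases hz : coeff p.1 g = 0
    · rw [hz]; ring
    have hpos : 0 < coeff p.1 g := lt_of_le_of_ne (hg _) (Ne.symm hz)
    have hab := Finset.HasAntidiagonal.mem_antidiagonal.mp hp
    obtain ⟨c0, c1, c2⟩ := comps hab
    rcases gsupp _ hpos with h1 | h1 <;>
      rw [h1] at c0 c1 c2 <;> simp only [e_apply0, e_apply1, e_apply2] at c0 c1 c2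
    · exact absurd (Prod.ext h1 (by rw [fs_eq_iff]; simp only [e_apply0, e_apply1, e_apply2]; omega)) hne
    · omega
  have E2 : coeff (e 0 2 1) f2 = coeff (e 0 0 1) g * coeff (e 0 2 0) h := by
    refine key _ _ _ (by rw [e_add]) ?_
    intro p hp hne
    by_cases hz : coeff p.1 g = 0
    · rw [hz]; ring
    have hpos : 0 < coeff p.1 g := lt_of_le_of_ne (hg _) (Ne.symm hz)
    have hab := Finset.HasAntidiagonal.mem_antidiagonal.mp hp
    obtain ⟨c0, c1, c2⟩ := comps hab
    rcases gsupp _ hpos with h1 | h1 <;>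
      rw [h1] at c0 c1 c2 <;> simp only [e_apply0, e_apply1, e_apply2] at c0 c1 c2
    · omega
    · exact absurd (Prod.ext h1 (by rw [fs_eq_iff]; simp only [e_apply0, e_apply1, e_apply2]; omega)) hne
  have E3 : coeff (e 1 1 1) f2 = coeff (e 1 0 0) g * coeff (e 0 1 1) h := by
    refine key _ _ _ (by rw [e_add]) ?_
    intro p hp hne
    by_cases hz : coeff p.1 g = 0
    · rw [hz]; ring
    have hpos : 0 < coeff p.1 g := lt_of_le_of_ne (hg _) (Ne.symm hz)
    have hab := Finset.HasAntidiagonal.mem_antidiagonal.mp hp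
    obtain ⟨c0, c1, c2⟩ := comps hab
    rcases gsupp _ hpos with h1 | h1 <;>
      rw [h1] at c0 c1 c2 <;> simp only [e_apply0, e_apply1, e_apply2] at c0 c1 c2
    · exact absurd (Prod.ext h1 (by rw [fs_eq_iff]; simp only [e_apply0, e_apply1, e_apply2]; omega)) hne
    · have hb' : p.2 = e 1 1 0 := by
        rw [fs_eq_iff]; simp only [e_apply0, e_apply1, e_apply2]; omega
      rw [hb', hh110]; ring
  have E4 : coeff (e 0 1 2) f2 = coeff (e 0 0 1) g * coeff (e 0 1 1) h := by
    refine key _ _ _ (by rw [e_add]) ?_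
    intro p hp hne
    by_cases hz : coeff p.1 g = 0
    · rw [hz]; ring
    have hpos : 0 < coeff p.1 g := lt_of_le_of_ne (hg _) (Ne.symm hz)
    have hab := Finset.HasAntidiagonal.mem_antidiagonal.mp hp
    obtain ⟨c0, c1, c2⟩ := comps hab
    rcases gsupp _ hpos with h1 | h1 <;>
      rw [h1] at c0 c1 c2 <;> simp only [e_apply0, e_apply1, e_apply2] at c0 c1 c2
    · omega
    · exact absurd (Prod.ext h1 (by rw [fs_eq_iff]; simp only [e_apply0, e_apply1, e_apply2]; omega)) hne
  -- numerics
  have v1 : coeff (e 1 2 0) f2 = 1 := by rw [coeff_f2]; norm_num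
  have v2 : coeff (e 0 2 1) f2 = 3 := by rw [coeff_f2]; norm_num
  have v3 : coeff (e 1 1 1) f2 = 2 := by rw [coeff_f2]; norm_num
  have v4 : coeff (e 0 1 2) f2 = 2 := by rw [coeff_f2]; norm_num
  rw [v1] at E1; rw [v2] at E2; rw [v3] at E3; rw [v4] at E4
  obtain ⟨ht1, ht2⟩ := ht
  nlinarith [mul_pos hα ht2, mul_pos hα hε, mul_pos ht1 ht2, mul_pos ht1 hε,
    mul_pos (mul_pos hα ht2) (mul_pos ht1 hε)]


lemma noFac1 : NoNonnegFactorization f1 := by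
  rintro ⟨g, h, hgd, hhd, hg, hh, hgh⟩
  have hX : (0 : ℝ) < coeff (e 3 0 0) (g * h) := by
    rw [← hgh, coeff_f1]; norm_num
  obtain ⟨a, b, hab, ha, hb⟩ := T2 hg hh hX
  obtain ⟨c0, c1, c2⟩ := comps hab
  have hacases : a 0 = 0 ∨ a 0 = 1 ∨ a 0 = 2 ∨ a 0 = 3 := by omega
  rcases hacases with h0 | h0 | h0 | h0
  · have hb' : b = e 3 0 0 := by
      rw [fs_eq_iff]; simp only [e_apply0, e_apply1, e_apply2]; omega
    rw [hb'] at hb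
    exact core0 f1_td hh hg (by rw [hgh, mul_comm]) hb hgd
  · have hb' : b = e 2 0 0 := by
      rw [fs_eq_iff]; simp only [e_apply0, e_apply1, e_apply2]; omega
    rw [hb'] at hb
    exact core1 hg hh hgh hb
  · have ha' : a = e 2 0 0 := by
      rw [fs_eq_iff]; simp only [e_apply0, e_apply1, e_apply2]; omega
    rw [ha'] at ha
    exact core1 hh hg (by rw [hgh, mul_comm]) ha
  · have ha' : a = e 3 0 0 := by
      rw [fs_eq_iff]; simp only [e_apply0, e_apply1, e_apply2]; omega
    rw [ha'] at ha
    exact core0 f1_td hg hh hgh ha hhd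

lemma noFac2 : NoNonnegFactorization f2 := by
  rintro ⟨g, h, hgd, hhd, hg, hh, hgh⟩
  have hX : (0 : ℝ) < coeff (e 3 0 0) (g * h) := by
    rw [← hgh, coeff_f2]; norm_num
  obtain ⟨a, b, hab, ha, hb⟩ := T2 hg hh hX
  obtain ⟨c0, c1, c2⟩ := comps hab
  have hacases : a 0 = 0 ∨ a 0 = 1 ∨ a 0 = 2 ∨ a 0 = 3 := by omega
  rcases hacases with h0 | h0 | h0 | h0
  · have hb' : b = e 3 0 0 := by
      rw [fs_eq_iff]; simp only [e_apply0, e_apply1, e_apply2]; omega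
    rw [hb'] at hb
    exact core0 f2_td hh hg (by rw [hgh, mul_comm]) hb hgd
  · have ha' : a = e 1 0 0 := by
      rw [fs_eq_iff]; simp only [e_apply0, e_apply1, e_apply2]; omega
    have hb' : b = e 2 0 0 := by
      rw [fs_eq_iff]; simp only [e_apply0, e_apply1, e_apply2]; omega
    rw [ha'] at ha; rw [hb'] at hb
    exact core2 hg hh hgh ha hb
  · have ha' : a = e 2 0 0 := by
      rw [fs_eq_iff]; simp only [e_apply0, e_apply1, e_apply2]; omega
    have hb' : b = e 1 0 0 := by
      rw [fs_eq_iff]; simp only [e_apply0, e_apply1, e_apply2]; omega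
    rw [ha'] at ha; rw [hb'] at hb
    exact core2 hh hg (by rw [hgh, mul_comm]) hb ha
  · have ha' : a = e 3 0 0 := by
      rw [fs_eq_iff]; simp only [e_apply0, e_apply1, e_apply2]; omega
    rw [ha'] at ha
    exact core0 f2_td hg hh hgh ha hhd

end Aux

theorem stmt12 : NoNonnegFactorization f1 ∧ NoNonnegFactorization f2 :=
  ⟨Aux.noFac1, Aux.noFac2⟩
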